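/- Let K = 2 and let θ_1, θ_2 be independent Gaussian random variables with θ_i ∼ N(μ̂_i, 1/N_i) for integers N_i ≥ 1. Let π = (π_1, π_2) maximize the M=2 ReMax objective J(π) = Σ_{i,j} π_i π_j E[max(θ_i, θ_j)] (with the diagonal convention E[max(θ_i, θ_i)] = μ̂_i) over the probability simplex, and suppose π_1 > 0 and π_2 > 0. Then π_2 · E[max(θ_1 − θ_2, 0)] = π_1 · E[max(θ_2 − θ_1, 0)]; equivalently, writing G_{i,j} := E[max(θ_i − θ_j, 0)] (which is strictly positive for Gaussian posteriors), π_2/π_1 = G_{2,1}/G_{1,2}. -/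

import Mathlib

open MeasureTheory ProbabilityTheory
open scoped NNReal

/-- The joint posterior on two arms: independent Gaussian coordinates
`θ_i ∼ N(μ̂_i, 1/N_i)`. -/
noncomputable def gaussPosterior2 (μhat : Fin 2 → ℝ) (N : Fin 2 → ℕ) :
    Measure (Fin 2 → ℝ) :=
  Measure.pi fun i => gaussianReal (μhat i) ((N i : ℝ≥0))⁻¹

/-- The `M = 2` ReMax objective for two arms, `J(π) = Σ_{i,j} π_i π_j E[max(θ_i, θ_j)]`,
where a repeated draw of the same arm reuses the same posterior sample (so the diagonal
term is `E[θ_i] = μ̂_i`). -/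
noncomputable def remaxJ2 (μhat : Fin 2 → ℝ) (N : Fin 2 → ℕ) (π : Fin 2 → ℝ) : ℝ :=
  ∫ θ, ∑ i, ∑ j, π i * π j * max (θ i) (θ j) ∂(gaussPosterior2 μhat N)

/-- The pairwise expected improvement `G_{i,j} = E[max(θ_i − θ_j, 0)]`. -/
noncomputable def pairEI2 (μhat : Fin 2 → ℝ) (N : Fin 2 → ℕ) (i j : Fin 2) : ℝ :=
  ∫ θ, max (θ i - θ j) 0 ∂(gaussPosterior2 μhat N)

namespace TwoArmAux

/-- The identity is integrable with respect to a nondegenerate Gaussian. -/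
lemma integrable_id_gaussianReal (m : ℝ) {v : ℝ≥0} (hv : v ≠ 0) :
    Integrable (fun x : ℝ => x) (gaussianReal m v) := by
  have hv0 : (0:ℝ) < (v:ℝ) := by
    have : v ≠ 0 := hv
    positivity
  set b : ℝ := (2 * (v:ℝ))⁻¹ with hbdef
  have hb : 0 < b := by positivity
  have h1 : Integrable (fun y : ℝ => (y + m) * Real.exp (-b * y ^ 2)) := by
    have h := (integrable_mul_exp_neg_mul_sq hb).add
      ((integrable_exp_neg_mul_sq hb).const_mul m)
    refine h.congr (ae_of_all _ fun y => ?_)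
    simp only [Pi.add_apply]; ring
  have h2 : Integrable (fun x : ℝ => x * Real.exp (-b * (x - m) ^ 2)) := by
    have := h1.comp_sub_right m
    simpa using this
  rw [gaussianReal_of_var_ne_zero m hv,
    integrable_withDensity_iff (measurable_gaussianPDF m v)
      (ae_of_all _ fun x => ENNReal.ofReal_lt_top)]
  refine ((h2.const_mul ((Real.sqrt (2 * Real.pi * v))⁻¹)).congr
    (ae_of_all _ fun x => ?_))
  show (Real.sqrt (2 * Real.pi * v))⁻¹ * (x * Real.exp (-b * (x - m) ^ 2))
      = x * (gaussianPDF m v x).toReal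
  have htor : (gaussianPDF m v x).toReal = gaussianPDFReal m v x := by
    rw [gaussianPDF]
    exact ENNReal.toReal_ofReal (gaussianPDFReal_nonneg m v x)
  rw [htor, gaussianPDFReal]
  rw [show -(x - m) ^ 2 / (2 * (v:ℝ)) = -b * (x - m) ^ 2 by rw [hbdef]; ring]
  ring

lemma integrable_fst' {μ ν : Measure ℝ} [IsProbabilityMeasure μ] [IsProbabilityMeasure ν]
    (h : Integrable (fun x : ℝ => x) μ) :
    Integrable (fun p : ℝ × ℝ => p.1) (μ.prod ν) := by
  have hmap : (μ.prod ν).map Prod.fst = μ := by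
    rw [Measure.map_fst_prod]; simp
  have h2 : Integrable (fun x : ℝ => x) ((μ.prod ν).map Prod.fst) := by
    rw [hmap]; exact h
  simpa [Function.comp] using
    (integrable_map_measure aestronglyMeasurable_id measurable_fst.aemeasurable).mp h2

lemma integrable_snd' {μ ν : Measure ℝ} [IsProbabilityMeasure μ] [IsProbabilityMeasure ν]
    (h : Integrable (fun x : ℝ => x) ν) :
    Integrable (fun p : ℝ × ℝ => p.2) (μ.prod ν) := by
  have hmap : (μ.prod ν).map Prod.snd = ν := by
    rw [Measure.map_snd_prod]; simp
  have h2 : Integrable (fun x : ℝ => x) ((μ.prod ν).map Prod.snd) := by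
    rw [hmap]; exact h
  simpa [Function.comp] using
    (integrable_map_measure aestronglyMeasurable_id measurable_snd.aemeasurable).mp h2

lemma integrable_bound {μ ν : Measure ℝ} [IsProbabilityMeasure μ] [IsProbabilityMeasure ν]
    (hμ : Integrable (fun x : ℝ => x) μ) (hν : Integrable (fun x : ℝ => x) ν)
    {f : ℝ × ℝ → ℝ} (hf : Measurable f) (hb : ∀ p : ℝ × ℝ, |f p| ≤ |p.1| + |p.2|) :
    Integrable f (μ.prod ν) := by
  refine Integrable.mono ((integrable_fst' (ν := ν) hμ).abs.add
    (integrable_snd' (μ := μ) hν).abs) hf.aestronglyMeasurable (ae_of_all _ fun p => ?_)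
  rw [Real.norm_eq_abs, Real.norm_eq_abs]
  exact (hb p).trans (le_abs_self _)

lemma abs_max_le (a b : ℝ) : |max a b| ≤ |a| + |b| := by
  rw [abs_le]
  constructor
  · have : -(|a| + |b|) ≤ a := by
      have := neg_abs_le a
      have := abs_nonneg b
      linarith
    exact this.trans (le_max_left _ _)
  · refine max_le ?_ ?_
    · have := le_abs_self a; have := abs_nonneg b; linarith
    · have := le_abs_self b; have := abs_nonneg a; linarith

lemma abs_max_sub_le (a b : ℝ) : |max (a - b) 0| ≤ |a| + |b| := by
  rw [abs_of_nonneg (le_max_right _ _)]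
  refine max_le ?_ (by positivity)
  calc a - b ≤ |a - b| := le_abs_self _
    _ ≤ |a| + |b| := abs_sub _ _

lemma gauss_set_ne_zero (m : ℝ) {v : ℝ≥0} (hv : v ≠ 0) {s : Set ℝ}
    (hs : volume s ≠ 0) : gaussianReal m v s ≠ 0 :=
  fun h => hs ((gaussianReal_absolutelyContinuous' m hv) h)

lemma max_add_left (a b : ℝ) : max a b = a + max (b - a) 0 := by
  rcases le_total a b with h | h
  · rw [max_eq_right h, max_eq_left (sub_nonneg.mpr h)]; ring
  · rw [max_eq_left h, max_eq_right (sub_nonpos.mpr h)]; ring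

lemma max_add_right (a b : ℝ) : max a b = b + max (a - b) 0 := by
  rw [max_comm]; exact max_add_left b a

/-- Transfer integrals over the two-coordinate product Gaussian to `ℝ × ℝ`. -/
lemma integral_pi_eq (μhat : Fin 2 → ℝ) (N : Fin 2 → ℕ) {f : (Fin 2 → ℝ) → ℝ}
    (g : ℝ × ℝ → ℝ) (hfg : ∀ θ : Fin 2 → ℝ, f θ = g (θ 0, θ 1)) :
    ∫ θ, f θ ∂(gaussPosterior2 μhat N) =
      ∫ p, g p ∂((gaussianReal (μhat 0) ((N 0 : ℝ≥0))⁻¹).prod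
        (gaussianReal (μhat 1) ((N 1 : ℝ≥0))⁻¹)) := by
  have h1 : ∫ θ, f θ ∂(gaussPosterior2 μhat N) =
      ∫ θ, g ((MeasurableEquiv.piFinTwo fun _ : Fin 2 => ℝ) θ)
        ∂(Measure.pi fun i => gaussianReal (μhat i) ((N i : ℝ≥0))⁻¹) := by
    refine integral_congr_ae (ae_of_all _ fun θ => ?_)
    rw [hfg]; rfl
  rw [h1]
  exact (measurePreserving_piFinTwo
    (fun i => gaussianReal (μhat i) ((N i : ℝ≥0))⁻¹)).integral_comp' g

lemma prod_max_pos {m0 m1 : ℝ} {v0 v1 : ℝ≥0} (hv0 : v0 ≠ 0) (hv1 : v1 ≠ 0) :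
    0 < ∫ p : ℝ × ℝ, max (p.1 - p.2) 0
      ∂((gaussianReal m0 v0).prod (gaussianReal m1 v1)) := by
  set ρ := (gaussianReal m0 v0).prod (gaussianReal m1 v1) with hρ
  have hint : Integrable (fun p : ℝ × ℝ => max (p.1 - p.2) 0) ρ :=
    integrable_bound (integrable_id_gaussianReal m0 hv0) (integrable_id_gaussianReal m1 hv1)
      ((measurable_fst.sub measurable_snd).max measurable_const)
      (fun p => abs_max_sub_le _ _)
  set S : Set (ℝ × ℝ) := Set.Ioi 1 ×ˢ Set.Iio 0 with hS
  have hSm : MeasurableSet S := measurableSet_Ioi.prod measurableSet_Iio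
  have hρS : ρ S ≠ 0 := by
    rw [hS, hρ, Measure.prod_prod]
    refine mul_ne_zero ?_ ?_
    · exact gauss_set_ne_zero m0 hv0 (by simp [Real.volume_Ioi])
    · exact gauss_set_ne_zero m1 hv1 (by simp [Real.volume_Iio])
  have hind : Integrable (S.indicator (fun _ => (1:ℝ))) ρ :=
    (integrable_const (1:ℝ)).indicator hSm
  have hle : ∀ p : ℝ × ℝ, S.indicator (fun _ => (1:ℝ)) p ≤ max (p.1 - p.2) 0 := by
    intro p
    by_cases hp : p ∈ S
    · rw [Set.indicator_of_mem hp]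
      obtain ⟨hp1, hp2⟩ := hp
      simp only [Set.mem_Ioi, Set.mem_Iio] at hp1 hp2
      have : (1:ℝ) ≤ p.1 - p.2 := by linarith
      exact this.trans (le_max_left _ _)
    · rw [Set.indicator_of_notMem hp]; exact le_max_right _ _
  have hmono := integral_mono hind hint hle
  have hEq : ∫ p, S.indicator (fun _ => (1:ℝ)) p ∂ρ = (ρ S).toReal := by
    rw [← measureReal_def]; exact integral_indicator_one (μ := ρ) hSm
  have hpos : 0 < (ρ S).toReal :=
    ENNReal.toReal_pos hρS (measure_ne_top ρ S)
  calc (0:ℝ) < (ρ S).toReal := hpos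
    _ = _ := hEq.symm
    _ ≤ _ := hmono

lemma prod_max_pos' {m0 m1 : ℝ} {v0 v1 : ℝ≥0} (hv0 : v0 ≠ 0) (hv1 : v1 ≠ 0) :
    0 < ∫ p : ℝ × ℝ, max (p.2 - p.1) 0
      ∂((gaussianReal m0 v0).prod (gaussianReal m1 v1)) := by
  set ρ := (gaussianReal m0 v0).prod (gaussianReal m1 v1) with hρ
  have hint : Integrable (fun p : ℝ × ℝ => max (p.2 - p.1) 0) ρ := by
    refine integrable_bound (integrable_id_gaussianReal m0 hv0)
      (integrable_id_gaussianReal m1 hv1)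
      ((measurable_snd.sub measurable_fst).max measurable_const) (fun p => ?_)
    have := abs_max_sub_le p.2 p.1
    linarith
  set S : Set (ℝ × ℝ) := Set.Iio 0 ×ˢ Set.Ioi 1 with hS
  have hSm : MeasurableSet S := measurableSet_Iio.prod measurableSet_Ioi
  have hρS : ρ S ≠ 0 := by
    rw [hS, hρ, Measure.prod_prod]
    refine mul_ne_zero ?_ ?_
    · exact gauss_set_ne_zero m0 hv0 (by simp [Real.volume_Iio])
    · exact gauss_set_ne_zero m1 hv1 (by simp [Real.volume_Ioi])
  have hind : Integrable (S.indicator (fun _ => (1:ℝ))) ρ :=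
    (integrable_const (1:ℝ)).indicator hSm
  have hle : ∀ p : ℝ × ℝ, S.indicator (fun _ => (1:ℝ)) p ≤ max (p.2 - p.1) 0 := by
    intro p
    by_cases hp : p ∈ S
    · rw [Set.indicator_of_mem hp]
      obtain ⟨hp1, hp2⟩ := hp
      simp only [Set.mem_Ioi, Set.mem_Iio] at hp1 hp2
      have : (1:ℝ) ≤ p.2 - p.1 := by linarith
      exact this.trans (le_max_left _ _)
    · rw [Set.indicator_of_notMem hp]; exact le_max_right _ _
  have hmono := integral_mono hind hint hle
  have hEq : ∫ p, S.indicator (fun _ => (1:ℝ)) p ∂ρ = (ρ S).toReal := by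
    rw [← measureReal_def]; exact integral_indicator_one (μ := ρ) hSm
  have hpos : 0 < (ρ S).toReal :=
    ENNReal.toReal_pos hρS (measure_ne_top ρ S)
  calc (0:ℝ) < (ρ S).toReal := hpos
    _ = _ := hEq.symm
    _ ≤ _ := hmono

/-- All the measure theory packaged: positivity of the two pairwise EIs, and a quadratic
representation of the ReMax objective. -/
lemma remax_repr (μhat : Fin 2 → ℝ) (N : Fin 2 → ℕ) (hN : ∀ i, 1 ≤ N i) :
    0 < pairEI2 μhat N 0 1 ∧ 0 < pairEI2 μhat N 1 0 ∧
    ∃ m0 m1 E : ℝ, E = m0 + pairEI2 μhat N 1 0 ∧ E = m1 + pairEI2 μhat N 0 1 ∧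
      ∀ w : Fin 2 → ℝ, remaxJ2 μhat N w =
        w 0 ^ 2 * m0 + w 1 ^ 2 * m1 + 2 * w 0 * w 1 * E := by
  have hv0 : ((N 0 : ℝ≥0))⁻¹ ≠ 0 :=
    inv_ne_zero (Nat.cast_ne_zero.mpr (by have := hN 0; omega))
  have hv1 : ((N 1 : ℝ≥0))⁻¹ ≠ 0 :=
    inv_ne_zero (Nat.cast_ne_zero.mpr (by have := hN 1; omega))
  set P := (gaussianReal (μhat 0) ((N 0 : ℝ≥0))⁻¹).prod
    (gaussianReal (μhat 1) ((N 1 : ℝ≥0))⁻¹) with hP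
  have Iid0 := integrable_id_gaussianReal (μhat 0) hv0
  have Iid1 := integrable_id_gaussianReal (μhat 1) hv1
  have I0 : Integrable (fun p : ℝ × ℝ => p.1) P := by
    rw [hP]; exact integrable_fst' Iid0
  have I1 : Integrable (fun p : ℝ × ℝ => p.2) P := by
    rw [hP]; exact integrable_snd' Iid1
  have Imax : Integrable (fun p : ℝ × ℝ => max p.1 p.2) P := by
    rw [hP]
    exact integrable_bound Iid0 Iid1 (measurable_fst.max measurable_snd)
      (fun p => abs_max_le _ _)
  have Isub01 : Integrable (fun p : ℝ × ℝ => max (p.1 - p.2) 0) P := by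
    rw [hP]
    exact integrable_bound Iid0 Iid1
      ((measurable_fst.sub measurable_snd).max measurable_const)
      (fun p => abs_max_sub_le _ _)
  have Isub10 : Integrable (fun p : ℝ × ℝ => max (p.2 - p.1) 0) P := by
    rw [hP]
    refine integrable_bound Iid0 Iid1
      ((measurable_snd.sub measurable_fst).max measurable_const) (fun p => ?_)
    have := abs_max_sub_le p.2 p.1
    linarith [this]
  have hG01 : pairEI2 μhat N 0 1 = ∫ p, max (p.1 - p.2) 0 ∂P := by
    rw [hP]
    exact integral_pi_eq μhat N (fun p => max (p.1 - p.2) 0) (fun θ => rfl)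
  have hG10 : pairEI2 μhat N 1 0 = ∫ p, max (p.2 - p.1) 0 ∂P := by
    rw [hP]
    exact integral_pi_eq μhat N (fun p => max (p.2 - p.1) 0) (fun θ => rfl)
  refine ⟨?_, ?_, ∫ p, p.1 ∂P, ∫ p, p.2 ∂P, ∫ p, max p.1 p.2 ∂P, ?_, ?_, ?_⟩
  · rw [hG01, hP]; exact prod_max_pos hv0 hv1
  · rw [hG10, hP]
    exact prod_max_pos' hv0 hv1
  · rw [hG10, ← integral_add I0 Isub10]
    exact integral_congr_ae (ae_of_all _ fun p => max_add_left _ _)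
  · rw [hG01, ← integral_add I1 Isub01]
    exact integral_congr_ae (ae_of_all _ fun p => max_add_right _ _)
  · intro w
    have hpt : remaxJ2 μhat N w =
        ∫ p, (w 0 ^ 2 * p.1 + (w 1 ^ 2 * p.2 + 2 * w 0 * w 1 * max p.1 p.2)) ∂P := by
      rw [hP]
      refine integral_pi_eq μhat N
        (fun p => w 0 ^ 2 * p.1 + (w 1 ^ 2 * p.2 + 2 * w 0 * w 1 * max p.1 p.2))
        (fun θ => ?_)
      simp only [Fin.sum_univ_two, max_self]
      rw [max_comm (θ 1) (θ 0)]
      ring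
    have Iadd : Integrable (fun p : ℝ × ℝ =>
        w 1 ^ 2 * p.2 + 2 * w 0 * w 1 * max p.1 p.2) P :=
      (I1.const_mul _).add (Imax.const_mul _)
    rw [hpt, integral_add (I0.const_mul (w 0 ^ 2)) Iadd,
      integral_add (I1.const_mul (w 1 ^ 2)) (Imax.const_mul (2 * w 0 * w 1)),
      integral_const_mul, integral_const_mul, integral_const_mul]
    ring

/-- Interior maximum of a concave quadratic has vanishing derivative. -/
lemma quad_deriv {A B C p : ℝ} (hA : A < 0) (hp0 : 0 < p) (hp1 : p < 1)
    (hq : ∀ t : ℝ, 0 ≤ t → t ≤ 1 →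
      A * t ^ 2 + B * t + C ≤ A * p ^ 2 + B * p + C) :
    2 * A * p + B = 0 := by
  by_contra hD0
  have habs : 0 < |2 * A * p + B| := abs_pos.mpr hD0
  have hKpos : 0 < -A := by linarith
  have step : ∀ ε : ℝ, 0 < ε → ε ≤ min p (1 - p) →
      |2 * A * p + B| ≤ -A * ε := by
    intro ε hε hεle
    have hεp : ε ≤ p := hεle.trans (min_le_left _ _)
    have hεp' : ε ≤ 1 - p := hεle.trans (min_le_right _ _)
    rcases le_or_gt (2 * A * p + B) 0 with hDle | hDpos
    · have hDneg : 2 * A * p + B < 0 := lt_of_le_of_ne hDle hD0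
      have h := hq (p - ε) (by linarith) (by linarith)
      rw [abs_of_neg hDneg]
      nlinarith [h, mul_pos hε hε]
    · have h := hq (p + ε) (by linarith) (by linarith)
      rw [abs_of_pos hDpos]
      nlinarith [h, mul_pos hε hε]
  have hδpos : 0 < min p (1 - p) := lt_min hp0 (by linarith)
  set ε := min (min p (1 - p)) (|2 * A * p + B| / (2 * (-A))) with hε
  have hεpos : 0 < ε := lt_min hδpos (div_pos habs (by linarith))
  have h1 := step ε hεpos (min_le_left _ _)
  have h2 : -A * ε ≤ -A * (|2 * A * p + B| / (2 * (-A))) :=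
    mul_le_mul_of_nonneg_left (min_le_right _ _) hKpos.le
  have hAne : -A ≠ 0 := ne_of_gt hKpos
  have h3 : -A * (|2 * A * p + B| / (2 * (-A))) = |2 * A * p + B| / 2 := by
    rw [← mul_div_assoc, mul_comm (-A) (|2 * A * p + B|), mul_div_mul_right _ _ hAne]
  linarith

end TwoArmAux

/-- Two-arm interior ReMax optimum: at an interior maximizer of the `M = 2` ReMax
objective, `π_2 G_{1,2} = π_1 G_{2,1}`; equivalently (`G_{1,2}, G_{2,1} > 0` for Gaussian
posteriors), `π_2/π_1 = G_{2,1}/G_{1,2}`. -/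
theorem two_arm_ratio_balance
    (μhat : Fin 2 → ℝ) (N : Fin 2 → ℕ) (hN : ∀ i, 1 ≤ N i)
    (π : Fin 2 → ℝ) (hπ0 : ∀ i, 0 ≤ π i) (hπ1 : ∑ i, π i = 1)
    (hmax : ∀ π' : Fin 2 → ℝ, (∀ i, 0 ≤ π' i) → (∑ i, π' i = 1) →
      remaxJ2 μhat N π' ≤ remaxJ2 μhat N π)
    (h1 : 0 < π 0) (h2 : 0 < π 1) :
    0 < pairEI2 μhat N 0 1 ∧
    0 < pairEI2 μhat N 1 0 ∧
    π 1 * pairEI2 μhat N 0 1 = π 0 * pairEI2 μhat N 1 0 ∧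
    π 1 / π 0 = pairEI2 μhat N 1 0 / pairEI2 μhat N 0 1 := by
  obtain ⟨hG01, hG10, m0, m1, E, hE0, hE1, hJ⟩ := TwoArmAux.remax_repr μhat N hN
  have hsum : π 0 + π 1 = 1 := by simpa [Fin.sum_univ_two] using hπ1
  have hp1 : π 1 = 1 - π 0 := by linarith
  have hplt : π 0 < 1 := by linarith
  set G01 := pairEI2 μhat N 0 1
  set G10 := pairEI2 μhat N 1 0
  have hm1 : m1 = E - G01 := by linarith
  have hm0 : m0 = E - G10 := by linarith
  have key : ∀ s : ℝ, s ^ 2 * m0 + (1 - s) ^ 2 * m1 + 2 * s * (1 - s) * E =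
      (-(G01 + G10)) * s ^ 2 + (2 * E - 2 * m1) * s + m1 := by
    intro s
    rw [hm0, hm1]
    ring
  have hq : ∀ t : ℝ, 0 ≤ t → t ≤ 1 →
      (-(G01 + G10)) * t ^ 2 + (2 * E - 2 * m1) * t + m1 ≤
      (-(G01 + G10)) * (π 0) ^ 2 + (2 * E - 2 * m1) * (π 0) + m1 := by
    intro t ht0 ht1
    have hconstr : ∀ i, 0 ≤ (![t, 1 - t] : Fin 2 → ℝ) i := by
      rw [Fin.forall_fin_two]
      refine ⟨by simpa using ht0, ?_⟩
      simp only [Matrix.cons_val_one, Matrix.head_cons, Matrix.cons_val_zero]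
      linarith
    have hsum' : ∑ i, (![t, 1 - t] : Fin 2 → ℝ) i = 1 := by
      simp [Fin.sum_univ_two]
    have hle := hmax ![t, 1 - t] hconstr hsum'
    rw [hJ ![t, 1 - t], hJ π] at hle
    simp only [Matrix.cons_val_zero, Matrix.cons_val_one, Matrix.head_cons] at hle
    rw [hp1] at hle
    rw [← key t, ← key (π 0)]
    calc t ^ 2 * m0 + (1 - t) ^ 2 * m1 + 2 * t * (1 - t) * E
        ≤ (π 0) ^ 2 * m0 + (1 - π 0) ^ 2 * m1 + 2 * (π 0) * (1 - π 0) * E := by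
          nlinarith [hle]
      _ = _ := by ring
  have hD := TwoArmAux.quad_deriv (by linarith : -(G01 + G10) < 0) h1 hplt hq
  rw [hm1] at hD
  have hbal : π 1 * G01 = π 0 * G10 := by
    rw [hp1]
    linear_combination hD / 2
  refine ⟨hG01, hG10, hbal, ?_⟩
  rw [div_eq_div_iff (ne_of_gt h1) (ne_of_gt hG01)]
  linear_combination hbal
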